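/- For all real η and r ≥ 0, (1/(4√π)) ∫_{-∞}^{η} e^{-t²} erfc(r t)² dt = 1/8 + (1/8)·erf(η) + T(√2·η, r) + (1/8)·Y(∞, r) + (1/8)·Y(η, r), where Y(η,r) = (2/√π)∫_0^η e^{-u²} erf(ru)² du, Y(∞,r) = lim_{η→∞} Y(η,r), T is Owen's T function, and erfc = 1 - erf. -/

import Mathlib

open MeasureTheory intervalIntegral Filter

/-- The error function. -/
noncomputable def erf (z : ℝ) : ℝ :=
  (2 / Real.sqrt Real.pi) * ∫ t in (0 : ℝ)..z, Real.exp (-t ^ 2)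

/-- The complementary error function. -/
noncomputable def erfc (z : ℝ) : ℝ := 1 - erf z

/-- Owen's T function. -/
noncomputable def owenT (h r : ℝ) : ℝ :=
  (1 / (2 * Real.pi)) * ∫ u in (0 : ℝ)..r,
    Real.exp (-h ^ 2 * (1 + u ^ 2) / 2) / (1 + u ^ 2)

/-- The function 𝓨(η, r). -/
noncomputable def Yfun (η r : ℝ) : ℝ :=
  (2 / Real.sqrt Real.pi) * ∫ u in (0 : ℝ)..η, Real.exp (-u ^ 2) * erf (r * u) ^ 2

open Set Metric

lemma sqrt_pi_pos : 0 < Real.sqrt Real.pi := Real.sqrt_pos.mpr Real.pi_pos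

lemma cont_gauss : Continuous fun t : ℝ => Real.exp (-t ^ 2) := by continuity

lemma integrable_gauss : Integrable fun t : ℝ => Real.exp (-t ^ 2) := by
  simpa using integrable_exp_neg_mul_sq (one_pos)

lemma gauss_Ioi : ∫ t in Ioi (0:ℝ), Real.exp (-t ^ 2) = Real.sqrt Real.pi / 2 := by
  simpa using integral_gaussian_Ioi 1

lemma gauss_Iic : ∫ t in Iic (0:ℝ), Real.exp (-t ^ 2) = Real.sqrt Real.pi / 2 := by
  have h := integral_comp_neg_Iic (0:ℝ) (fun t => Real.exp (-t ^ 2))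
  simp only [neg_zero] at h
  rw [← gauss_Ioi, ← h]
  congr 1; ext t; rw [neg_sq]

lemma erf_hasDerivAt (z : ℝ) :
    HasDerivAt erf (2 / Real.sqrt Real.pi * Real.exp (-z ^ 2)) z := by
  have h := (cont_gauss.integral_hasStrictDerivAt 0 z).hasDerivAt
  exact h.const_mul (2 / Real.sqrt Real.pi)

lemma erf_cont : Continuous erf :=
  continuous_iff_continuousAt.mpr fun z => (erf_hasDerivAt z).continuousAt

lemma erf_neg (z : ℝ) : erf (-z) = - erf z := by
  unfold erf
  have : (∫ t in (0:ℝ)..(-z), Real.exp (-t ^ 2)) = - ∫ t in (0:ℝ)..z, Real.exp (-t ^ 2) := by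
    have h := intervalIntegral.integral_comp_neg (a := z) (b := 0)
      (fun t => Real.exp (-t ^ 2))
    simp only [neg_zero, neg_sq] at h
    rw [← h, intervalIntegral.integral_symm]
  rw [this]; ring

lemma gauss_interval_le {z : ℝ} (hz : 0 ≤ z) :
    (∫ t in (0:ℝ)..z, Real.exp (-t ^ 2)) ≤ Real.sqrt Real.pi / 2 := by
  rw [intervalIntegral.integral_of_le hz, ← gauss_Ioi]
  apply setIntegral_mono_set integrable_gauss.integrableOn
  · filter_upwards with t using (Real.exp_pos _).le
  · filter_upwards with t ht using ht.1

lemma erf_nonneg_of_nonneg {z : ℝ} (hz : 0 ≤ z) : 0 ≤ erf z := by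
  unfold erf
  apply mul_nonneg (by positivity)
  apply intervalIntegral.integral_nonneg hz
  intro t _; exact (Real.exp_pos _).le

lemma erf_le_one_of_nonneg {z : ℝ} (hz : 0 ≤ z) : erf z ≤ 1 := by
  unfold erf
  have h := gauss_interval_le hz
  have hπ := sqrt_pi_pos
  calc 2 / Real.sqrt Real.pi * ∫ t in (0:ℝ)..z, Real.exp (-t ^ 2)
      ≤ 2 / Real.sqrt Real.pi * (Real.sqrt Real.pi / 2) := by
        apply mul_le_mul_of_nonneg_left h (by positivity)
    _ = 1 := by field_simp
  
lemma abs_erf_le_one (z : ℝ) : |erf z| ≤ 1 := by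
  rcases le_or_gt 0 z with hz | hz
  · rw [abs_of_nonneg (erf_nonneg_of_nonneg hz)]; exact erf_le_one_of_nonneg hz
  · have h := erf_neg (-z)
    rw [neg_neg] at h
    rw [h, abs_neg, abs_of_nonneg (erf_nonneg_of_nonneg (by linarith))]
    exact erf_le_one_of_nonneg (by linarith)







lemma cont_g (r : ℝ) : Continuous fun t : ℝ => Real.exp (-t ^ 2) * erfc (r * t) ^ 2 := by
  have : Continuous erfc := continuous_const.sub erf_cont
  exact cont_gauss.mul (((this.comp (continuous_const.mul continuous_id)).pow 2))

lemma integrable_g (r : ℝ) :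
    Integrable fun t : ℝ => Real.exp (-t ^ 2) * erfc (r * t) ^ 2 := by
  apply (integrable_gauss.const_mul 4).mono' (cont_g r).aestronglyMeasurable
  filter_upwards with t
  have h1 : |erfc (r * t)| ≤ 2 := by
    have := abs_erf_le_one (r * t)
    unfold erfc
    rw [abs_le] at *
    constructor <;> linarith [this.1, this.2]
  have h2 : erfc (r * t) ^ 2 ≤ 4 := by nlinarith [abs_nonneg (erfc (r*t)), sq_abs (erfc (r*t))]
  rw [Real.norm_eq_abs, abs_mul, abs_of_nonneg (Real.exp_pos _).le, abs_of_nonneg (sq_nonneg _)]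
  calc Real.exp (-t ^ 2) * erfc (r * t) ^ 2 ≤ Real.exp (-t ^ 2) * 4 :=
        mul_le_mul_of_nonneg_left h2 (Real.exp_pos _).le
    _ = 4 * Real.exp (-t ^ 2) := by ring

lemma F_eq (r η : ℝ) :
    (∫ t in Iic η, Real.exp (-t ^ 2) * erfc (r * t) ^ 2)
      = (∫ t in Iic (0:ℝ), Real.exp (-t ^ 2) * erfc (r * t) ^ 2)
        + ∫ t in (0:ℝ)..η, Real.exp (-t ^ 2) * erfc (r * t) ^ 2 := by
  have h := integral_Iic_sub_Iic ((integrable_g r).integrableOn (s := Iic 0))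
    ((integrable_g r).integrableOn (s := Iic η))
  linarith [h]

lemma F_hasDerivAt (r η : ℝ) :
    HasDerivAt (fun x => ∫ t in Iic x, Real.exp (-t ^ 2) * erfc (r * t) ^ 2)
      (Real.exp (-η ^ 2) * erfc (r * η) ^ 2) η := by
  have h := ((cont_g r).integral_hasStrictDerivAt 0 η).hasDerivAt
  have h2 := h.const_add (∫ t in Iic (0:ℝ), Real.exp (-t ^ 2) * erfc (r * t) ^ 2)
  exact h2.congr_of_eventuallyEq (Filter.Eventually.of_forall fun x => (F_eq r x))

lemma Y_hasDerivAt (r η : ℝ) :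
    HasDerivAt (fun x => Yfun x r)
      (2 / Real.sqrt Real.pi * (Real.exp (-η ^ 2) * erf (r * η) ^ 2)) η := by
  have hc : Continuous fun u : ℝ => Real.exp (-u ^ 2) * erf (r * u) ^ 2 :=
    cont_gauss.mul ((erf_cont.comp (continuous_const.mul continuous_id)).pow 2)
  exact ((hc.integral_hasStrictDerivAt 0 η).hasDerivAt).const_mul _

lemma owen_rw (r x : ℝ) : owenT (Real.sqrt 2 * x) r
    = (1 / (2 * Real.pi)) * ∫ u in (0:ℝ)..r, Real.exp (-x ^ 2 * (1 + u ^ 2)) / (1 + u ^ 2) := by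
  have h : ∀ u : ℝ, -(Real.sqrt 2 * x) ^ 2 * (1 + u ^ 2) / 2 = -x ^ 2 * (1 + u ^ 2) := by
    intro u
    rw [mul_pow, Real.sq_sqrt (by norm_num : (0:ℝ) ≤ 2)]
    ring
  unfold owenT
  rw [intervalIntegral.integral_congr (g := fun u => Real.exp (-x ^ 2 * (1 + u ^ 2)) / (1 + u ^ 2))
    (fun u _ => by rw [h u])]

lemma one_add_sq_pos (u : ℝ) : (0:ℝ) < 1 + u ^ 2 := by positivity

lemma owenInt_hasDerivAt (r x : ℝ) :
    HasDerivAt (fun y => ∫ u in (0:ℝ)..r, Real.exp (-y ^ 2 * (1 + u ^ 2)) / (1 + u ^ 2))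
      (∫ u in (0:ℝ)..r, -2 * x * Real.exp (-x ^ 2 * (1 + u ^ 2))) x := by
  have hcont : ∀ y : ℝ, Continuous fun u : ℝ => Real.exp (-y ^ 2 * (1 + u ^ 2)) / (1 + u ^ 2) := by
    intro y
    exact (Real.continuous_exp.comp (by continuity)).div (by continuity)
      (fun u => (one_add_sq_pos u).ne')
  have hcont' : Continuous fun u : ℝ => -2 * x * Real.exp (-x ^ 2 * (1 + u ^ 2)) :=
    continuous_const.mul (Real.continuous_exp.comp (by continuity))
  have key := intervalIntegral.hasDerivAt_integral_of_dominated_loc_of_deriv_le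
    (F := fun y u => Real.exp (-y ^ 2 * (1 + u ^ 2)) / (1 + u ^ 2))
    (F' := fun y u => -2 * y * Real.exp (-y ^ 2 * (1 + u ^ 2)))
    (x₀ := x) (a := 0) (b := r) (μ := volume)
    (bound := fun _ => 2 * (|x| + 1))
    (s := ball x 1) (ball_mem_nhds x one_pos)
    (Filter.Eventually.of_forall fun y => (hcont y).aestronglyMeasurable)
    ((hcont x).intervalIntegrable 0 r)
    ((continuous_const.mul (Real.continuous_exp.comp (by continuity))).aestronglyMeasurable)
    ?_ (intervalIntegrable_const) ?_
  · exact key.2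
  · filter_upwards with u _ y hy
    have hexp : Real.exp (-y ^ 2 * (1 + u ^ 2)) ≤ 1 := by
      rw [Real.exp_le_one_iff]
      nlinarith [sq_nonneg y, sq_nonneg u]
    have hyx : |y| ≤ |x| + 1 := by
      have := mem_ball_iff_norm.mp hy
      have h2 : |y - x| ≤ 1 := le_of_lt (by simpa [Real.norm_eq_abs] using this)
      calc |y| = |x + (y - x)| := by ring_nf
        _ ≤ |x| + |y - x| := abs_add_le _ _
        _ ≤ |x| + 1 := by linarith
    rw [Real.norm_eq_abs, abs_mul, abs_mul]
    rw [abs_of_nonneg (Real.exp_pos _).le]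
    calc |(-2:ℝ)| * |y| * Real.exp (-y ^ 2 * (1 + u ^ 2)) ≤ 2 * (|x| + 1) * 1 := by
          rw [abs_neg, abs_two]
          apply mul_le_mul (mul_le_mul_of_nonneg_left hyx (by norm_num)) hexp
            (Real.exp_pos _).le (by positivity)
      _ = 2 * (|x| + 1) := by ring
  · filter_upwards with u _ y _
    have h1 : HasDerivAt (fun y : ℝ => -y ^ 2 * (1 + u ^ 2)) (-2 * y * (1 + u ^ 2)) y := by
      have := (hasDerivAt_pow 2 y).neg.mul_const (1 + u ^ 2)
      simpa using this.congr_deriv (by ring)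
    have h2 := (h1.exp).div_const (1 + u ^ 2)
    convert h2 using 1
    · rfl
    rw [mul_div_assoc, mul_div_cancel_right₀ _ (one_add_sq_pos u).ne']
    ring

lemma owen_deriv_value (r x : ℝ) :
    (1 / (2 * Real.pi)) * ∫ u in (0:ℝ)..r, -2 * x * Real.exp (-x ^ 2 * (1 + u ^ 2))
      = -(1 / (2 * Real.sqrt Real.pi)) * Real.exp (-x ^ 2) * erf (r * x) := by
  have key : x • ∫ u in (0:ℝ)..r, Real.exp (-(u * x) ^ 2)
      = ∫ s in (0:ℝ)..(r * x), Real.exp (-s ^ 2) := by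
    have := intervalIntegral.smul_integral_comp_mul_right (a := (0:ℝ)) (b := r)
      (fun s => Real.exp (-s ^ 2)) x
    simpa using this
  have h1 : (∫ u in (0:ℝ)..r, -2 * x * Real.exp (-x ^ 2 * (1 + u ^ 2)))
      = (-2 * Real.exp (-x ^ 2)) * (x * ∫ u in (0:ℝ)..r, Real.exp (-(u * x) ^ 2)) := by
    rw [show (-2 * Real.exp (-x ^ 2)) * (x * ∫ u in (0:ℝ)..r, Real.exp (-(u * x) ^ 2))
        = (-2 * Real.exp (-x ^ 2) * x) * ∫ u in (0:ℝ)..r, Real.exp (-(u * x) ^ 2) by ring,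
      ← intervalIntegral.integral_const_mul]
    apply intervalIntegral.integral_congr
    intro u _
    simp only
    rw [show -x ^ 2 * (1 + u ^ 2) = -x ^ 2 + -(u * x) ^ 2 by ring, Real.exp_add]
    ring
  rw [h1, show x * ∫ u in (0:ℝ)..r, Real.exp (-(u * x) ^ 2)
      = x • ∫ u in (0:ℝ)..r, Real.exp (-(u * x) ^ 2) from rfl, key]
  unfold erf
  have hπ : Real.sqrt Real.pi * Real.sqrt Real.pi = Real.pi :=
    Real.mul_self_sqrt Real.pi_pos.le
  have h3 : Real.sqrt Real.pi ≠ 0 := sqrt_pi_pos.ne'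
  set s := Real.sqrt Real.pi with hs
  rw [show Real.pi = s * s from hπ.symm]
  field_simp

lemma owen_hasDerivAt (r x : ℝ) :
    HasDerivAt (fun y => owenT (Real.sqrt 2 * y) r)
      (-(1 / (2 * Real.sqrt Real.pi)) * Real.exp (-x ^ 2) * erf (r * x)) x := by
  have h := (owenInt_hasDerivAt r x).const_mul (1 / (2 * Real.pi))
  rw [owen_deriv_value r x] at h
  exact h.congr_of_eventuallyEq (Filter.Eventually.of_forall fun y => (owen_rw r y))

lemma limF (r : ℝ) :
    Tendsto (fun η => ∫ t in Iic η, Real.exp (-t ^ 2) * erfc (r * t) ^ 2) atBot (nhds 0) := by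
  have h := intervalIntegral_tendsto_integral_Iic (f := fun t => Real.exp (-t ^ 2) * erfc (r * t) ^ 2)
    (μ := volume) 0 ((integrable_g r).integrableOn) tendsto_id
  have h2 := (tendsto_const_nhds (x := ∫ t in Iic (0:ℝ), Real.exp (-t ^ 2) * erfc (r * t) ^ 2)
    (f := atBot)).sub h
  rw [sub_self] at h2
  apply h2.congr
  intro η
  have h3 := integral_Iic_sub_Iic ((integrable_g r).integrableOn (s := Iic η))
    ((integrable_g r).integrableOn (s := Iic 0))
  simp only [id_eq]
  linarith [h3]

lemma limerf : Tendsto erf atBot (nhds (-1)) := by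
  have h := intervalIntegral_tendsto_integral_Iic (f := fun t => Real.exp (-t ^ 2))
    (μ := volume) 0 (integrable_gauss.integrableOn) tendsto_id
  rw [gauss_Iic] at h
  have h2 := h.const_mul (-(2 / Real.sqrt Real.pi))
  have hval : -(2 / Real.sqrt Real.pi) * (Real.sqrt Real.pi / 2) = -1 := by
    field_simp
  rw [hval] at h2
  apply h2.congr
  intro η
  simp only [id]
  rw [intervalIntegral.integral_symm]
  unfold erf
  ring

lemma limT (r : ℝ) (hr : 0 ≤ r) :
    Tendsto (fun η => owenT (Real.sqrt 2 * η) r) atBot (nhds 0) := by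
  have hb : Tendsto (fun η : ℝ => 1 / (2 * Real.pi) * (Real.exp (-η ^ 2) * r)) atBot (nhds 0) := by
    have hsq : Tendsto (fun η : ℝ => -η ^ 2) atBot atBot := by
      apply tendsto_neg_atTop_atBot.comp
      have : Tendsto (fun η : ℝ => (-η) ^ 2) atBot atTop :=
        (tendsto_pow_atTop (two_ne_zero)).comp tendsto_neg_atBot_atTop
      apply this.congr
      intro η; rw [neg_sq]
    have := (Real.tendsto_exp_atBot.comp hsq).mul_const r
    have h2 := this.const_mul (1 / (2 * Real.pi))
    simpa using h2
  apply squeeze_zero_norm _ hb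
  intro η
  rw [owen_rw]
  rw [Real.norm_eq_abs, abs_mul, abs_of_nonneg (by positivity : (0:ℝ) ≤ 1 / (2 * Real.pi))]
  apply mul_le_mul_of_nonneg_left _ (by positivity)
  have hbound : ∀ u ∈ Set.uIoc (0:ℝ) r, ‖Real.exp (-η ^ 2 * (1 + u ^ 2)) / (1 + u ^ 2)‖
      ≤ Real.exp (-η ^ 2) := by
    intro u _
    rw [Real.norm_eq_abs, abs_of_nonneg (by positivity)]
    calc Real.exp (-η ^ 2 * (1 + u ^ 2)) / (1 + u ^ 2) ≤ Real.exp (-η ^ 2 * (1 + u ^ 2)) := by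
          apply div_le_self (Real.exp_pos _).le
          nlinarith [sq_nonneg u]
      _ ≤ Real.exp (-η ^ 2) := by
          apply Real.exp_le_exp.mpr
          nlinarith [sq_nonneg u, sq_nonneg η]
  have := intervalIntegral.norm_integral_le_of_norm_le_const hbound
  rw [Real.norm_eq_abs] at this
  calc |∫ u in (0:ℝ)..r, Real.exp (-η ^ 2 * (1 + u ^ 2)) / (1 + u ^ 2)|
      ≤ Real.exp (-η ^ 2) * |r - 0| := this
    _ = Real.exp (-η ^ 2) * r := by rw [sub_zero, abs_of_nonneg hr]

lemma Yfun_neg (r η : ℝ) : Yfun (-η) r = - Yfun η r := by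
  unfold Yfun
  have h := intervalIntegral.integral_comp_neg (a := η) (b := 0)
    (fun u => Real.exp (-u ^ 2) * erf (r * u) ^ 2)
  simp only [neg_zero] at h
  have heq : (∫ u in η..(0:ℝ), Real.exp (-(-u) ^ 2) * erf (r * -u) ^ 2)
      = ∫ u in η..(0:ℝ), Real.exp (-u ^ 2) * erf (r * u) ^ 2 := by
    apply intervalIntegral.integral_congr
    intro u _
    simp only
    rw [neg_sq, show r * -u = -(r * u) by ring, erf_neg, neg_sq]
  rw [heq] at h
  rw [← h, intervalIntegral.integral_symm]
  ring

lemma limY (r Yinf : ℝ) (hY : Tendsto (fun η => Yfun η r) atTop (nhds Yinf)) :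
    Tendsto (fun η => Yfun η r) atBot (nhds (-Yinf)) := by
  have h := (hY.comp tendsto_neg_atBot_atTop).neg
  apply h.congr
  intro η
  simp only [Function.comp]
  rw [Yfun_neg]
  ring

theorem trivariate_cdf_identity (η r : ℝ) (hr : 0 ≤ r) (Yinf : ℝ)
    (hY : Tendsto (fun η => Yfun η r) atTop (nhds Yinf)) :
    (1 / (4 * Real.sqrt Real.pi)) * ∫ t in Set.Iic η, Real.exp (-t ^ 2) * erfc (r * t) ^ 2
      = 1 / 8 + (1 / 8) * erf η + owenT (Real.sqrt 2 * η) r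
        + (1 / 8) * Yinf + (1 / 8) * Yfun η r := by
  set c : ℝ := 1 / (4 * Real.sqrt Real.pi) with hc
  set Φ : ℝ → ℝ := fun x =>
    c * (∫ t in Iic x, Real.exp (-t ^ 2) * erfc (r * t) ^ 2)
      - (1 / 8 + (1 / 8) * erf x + owenT (Real.sqrt 2 * x) r
        + (1 / 8) * Yinf + (1 / 8) * Yfun x r) with hΦ
  have hderiv : ∀ x, HasDerivAt Φ 0 x := by
    intro x
    rw [hΦ]
    have h1 := (F_hasDerivAt r x).const_mul c
    have h2 := (erf_hasDerivAt x).const_mul (1/8 : ℝ)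
    have h3 := owen_hasDerivAt r x
    have h4 := (Y_hasDerivAt r x).const_mul (1/8 : ℝ)
    have h5 := ((((hasDerivAt_const x ((1:ℝ)/8)).add h2).add h3).add
      (hasDerivAt_const x ((1/8 : ℝ) * Yinf))).add h4
    have h6 := h1.sub h5
    have hkey : c * (Real.exp (-x ^ 2) * erfc (r * x) ^ 2)
        - (0 + 1 / 8 * (2 / Real.sqrt Real.pi * Real.exp (-x ^ 2))
          + -(1 / (2 * Real.sqrt Real.pi)) * Real.exp (-x ^ 2) * erf (r * x)
          + 0 + 1 / 8 * (2 / Real.sqrt Real.pi * (Real.exp (-x ^ 2) * erf (r * x) ^ 2))) = 0 := by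
      rw [hc]
      unfold erfc
      have h7 : Real.sqrt Real.pi ≠ 0 := sqrt_pi_pos.ne'
      field_simp
      ring
    rw [← hkey]
    exact h6
  have hconst : ∀ x y : ℝ, Φ x = Φ y := fun x y =>
    is_const_of_deriv_eq_zero (fun z => (hderiv z).differentiableAt)
      (fun z => (hderiv z).deriv) x y
  have hlim : Tendsto Φ atBot (nhds 0) := by
    have hmain := ((limF r).const_mul c).sub
      (((((tendsto_const_nhds (x := (1:ℝ)/8) (f := (atBot : Filter ℝ))).add
        (limerf.const_mul (1/8 : ℝ))).add (limT r hr)).add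
        (tendsto_const_nhds (x := (1/8 : ℝ) * Yinf))).add ((limY r Yinf hY).const_mul (1/8 : ℝ)))
    have hval : c * 0 - ((1:ℝ)/8 + 1/8 * (-1) + 0 + 1/8 * Yinf + 1/8 * (-Yinf)) = 0 := by ring
    rw [hval] at hmain
    rw [hΦ]
    exact hmain
  have hlim2 : Tendsto Φ atBot (nhds (Φ η)) := by
    have h8 : Φ = fun _ => Φ η := funext fun x => hconst x η
    rw [h8]
    exact tendsto_const_nhds
  have h0 : Φ η = 0 := tendsto_nhds_unique hlim2 hlim
  rw [hΦ] at h0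
  simp only at h0
  linarith
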